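/- Let P be an N×N column-stochastic matrix with stationary vector π having positive entries, Π the matrix of repeated columns of π, and suppose Z = (I − P + Π)⁻¹ exists. Define D diagonal with D_{ii} = 1/π_i, Z₀ the diagonal part of Z, and E the all-ones matrix. Then M = D·(I − Z + Z₀·E) satisfies M = E + M·P − D·P and M_{ii} = 1/π_i. -/

import Mathlib

/-- The explicit solution of the mean-first-passage-time equation: with `P`
column-stochastic, stationary vector `pv` positive, `Π` the matrix of repeated columns
of `pv`, `Z = (I - P + Π)⁻¹` (assumed to exist), `D` diagonal with `D_{ii} = 1/pv i`,
`Z₀` the diagonal part of `Z`, and `E` the all-ones matrix, the matrix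
`M = D·(I - Z + Z₀·E)` satisfies `M = E + M·P - D·P` and `M_{ii} = 1/pv i`. -/
theorem mfpt_solution {N : ℕ} (P : Matrix (Fin N) (Fin N) ℝ)
    (hpos : ∀ i j, 0 ≤ P i j) (hcol : ∀ j, ∑ i, P i j = 1)
    (pv : Fin N → ℝ) (hstat : P.mulVec pv = pv) (hsum : ∑ j, pv j = 1)
    (hppos : ∀ i, 0 < pv i)
    (hZ : IsUnit (1 - P + Matrix.of fun i _ => pv i)) :
    let E : Matrix (Fin N) (Fin N) ℝ := Matrix.of fun _ _ => 1
    let D : Matrix (Fin N) (Fin N) ℝ := Matrix.diagonal fun i => (pv i)⁻¹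
    let Z : Matrix (Fin N) (Fin N) ℝ := (1 - P + Matrix.of fun i _ => pv i)⁻¹
    let Z0 : Matrix (Fin N) (Fin N) ℝ := Matrix.diagonal fun i => Z i i
    let M : Matrix (Fin N) (Fin N) ℝ := D * (1 - Z + Z0 * E)
    M = E + M * P - D * P ∧ ∀ i, M i i = (pv i)⁻¹ := by
  intro E D Z Z0 M
  set Pi : Matrix (Fin N) (Fin N) ℝ := Matrix.of fun i _ => pv i with hPi
  set A : Matrix (Fin N) (Fin N) ℝ := 1 - P + Pi with hA
  have hdet : IsUnit A.det := (Matrix.isUnit_iff_isUnit_det A).mp hZ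
  have hZA : Z * A = 1 := Matrix.nonsing_inv_mul A hdet
  -- P * Π = Π
  have hPPi : P * Pi = Pi := by
    ext i j
    have := congrFun hstat i
    simpa [Matrix.mul_apply, Matrix.mulVec, dotProduct, hPi, Matrix.of_apply] using this
  -- Π * Π = Π
  have hPiPi : Pi * Pi = Pi := by
    ext i j
    simp [Matrix.mul_apply, hPi, Matrix.of_apply, ← Finset.mul_sum, hsum]
  -- A * Π = Π
  have hAPi : A * Pi = Pi := by
    rw [hA, add_mul, sub_mul, one_mul, hPPi, hPiPi, sub_self, zero_add]
  -- Z * Π = Π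
  have hZPi : Z * Pi = Pi := by
    calc Z * Pi = Z * (A * Pi) := by rw [hAPi]
    _ = (Z * A) * Pi := by rw [Matrix.mul_assoc]
    _ = Pi := by rw [hZA, Matrix.one_mul]
  -- Z * P = Z + Π - 1
  have hZP : Z * P = Z + Pi - 1 := by
    have h1 : Z - Z * P + Pi = 1 := by
      have := hZA
      rw [hA, Matrix.mul_add, Matrix.mul_sub, Matrix.mul_one, hZPi] at this
      exact this
    rw [eq_sub_iff_add_eq, ← h1]
    abel
  -- E * P = E
  have hEP : E * P = E := by
    ext i j
    simp [Matrix.mul_apply, E, hcol j]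
  -- D * Π = E
  have hDPi : D * Pi = E := by
    ext i j
    simp [D, E, hPi, Matrix.diagonal_mul, inv_mul_cancel₀ (hppos i).ne']
  -- Z0 * E * P = Z0 * E
  have hZ0EP : Z0 * E * P = Z0 * E := by rw [Matrix.mul_assoc, hEP]
  constructor
  · have hMP : M * P = M + D * P - E := by
      calc M * P = D * ((1 - Z + Z0 * E) * P) := by rw [Matrix.mul_assoc]
      _ = D * (P - (Z + Pi - 1) + Z0 * E) := by
          rw [Matrix.add_mul, Matrix.sub_mul, Matrix.one_mul, hZP, hZ0EP]
      _ = D * ((1 - Z + Z0 * E) + P - Pi) := by congr 1; abel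
      _ = D * (1 - Z + Z0 * E) + D * P - D * Pi := by
          rw [Matrix.mul_sub, Matrix.mul_add]
      _ = M + D * P - E := by rw [hDPi]
    rw [hMP]; abel
  · intro i
    have h1 : (Z0 * E) i i = Z i i := by
      simp [Z0, E, Matrix.diagonal_mul]
    have h2 : M i i = (pv i)⁻¹ * ((1 - Z + Z0 * E) i i) := by
      show (D * (1 - Z + Z0 * E)) i i = _
      rw [Matrix.diagonal_mul]
    rw [h2]
    simp [Matrix.add_apply, Matrix.sub_apply, h1, Matrix.one_apply_eq]
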